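/- (Strong duality for minimum dual-norm interpolation) If X ∈ ℝ^{n×p} has full row rank, then min over θ with Xθ = y of ‖θ‖_* equals max over α ∈ ℝⁿ with ‖αᵀX‖ ≤ 1 of αᵀy. Moreover, θ̂ and α̂ are optimal for the respective problems if and only if Xᵀα̂ belongs to the subdifferential of ‖·‖_* at θ̂. -/

import Mathlib

open Matrix

/-- The dual norm `‖θ‖_* = sup_{‖x‖ ≤ 1} |θᵀx|` of a norm `N` on `ℝ^p`. -/
noncomputable def dualNorm {p : ℕ} (N : (Fin p → ℝ) → ℝ) (θ : Fin p → ℝ) : ℝ :=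
  sSup {v | ∃ x : Fin p → ℝ, N x ≤ 1 ∧ v = |θ ⬝ᵥ x|}

/-- The adversarial training risk `(1/n) ∑ᵢ (|yᵢ - xᵢᵀθ| + δ‖θ‖_*)²`. -/
noncomputable def advRisk {n p : ℕ} (N : (Fin p → ℝ) → ℝ)
    (X : Matrix (Fin n) (Fin p) ℝ) (y : Fin n → ℝ) (δ : ℝ) (θ : Fin p → ℝ) : ℝ :=
  (1 / n : ℝ) * ∑ i, (|y i - X i ⬝ᵥ θ| + δ * dualNorm N θ) ^ 2

set_option linter.unusedSectionVars false
open Matrix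

section helpers
variable {p : ℕ} {N : (Fin p → ℝ) → ℝ}

lemma N_zero (hN_smul : ∀ (a : ℝ) v, N (a • v) = |a| * N v) : N 0 = 0 := by
  simpa using hN_smul 0 0

lemma N_neg (hN_smul : ∀ (a : ℝ) v, N (a • v) = |a| * N v) (v : Fin p → ℝ) :
    N (-v) = N v := by
  simpa using hN_smul (-1) v

lemma N_nonneg (hN_smul : ∀ (a : ℝ) v, N (a • v) = |a| * N v)
    (hN_add : ∀ v w, N (v + w) ≤ N v + N w) (v : Fin p → ℝ) : 0 ≤ N v := by
  have h := hN_add v (-v)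
  rw [add_neg_cancel, N_zero hN_smul, N_neg hN_smul] at h
  linarith

lemma N_sum (hN_smul : ∀ (a : ℝ) v, N (a • v) = |a| * N v)
    (hN_add : ∀ v w, N (v + w) ≤ N v + N w) {ι : Type*} (s : Finset ι)
    (f : ι → Fin p → ℝ) : N (∑ i ∈ s, f i) ≤ ∑ i ∈ s, N (f i) := by
  classical
  induction s using Finset.induction with
  | empty => simp [N_zero hN_smul]
  | insert a s hi ih =>
    rw [Finset.sum_insert hi, Finset.sum_insert hi]
    exact (hN_add _ _).trans (by linarith)

lemma N_upper (hN_smul : ∀ (a : ℝ) v, N (a • v) = |a| * N v)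
    (hN_add : ∀ v w, N (v + w) ≤ N v + N w) :
    ∃ C : ℝ, 0 ≤ C ∧ ∀ x, N x ≤ C * ‖x‖ := by
  refine ⟨∑ i, N (Pi.single i 1), Finset.sum_nonneg fun i _ => N_nonneg hN_smul hN_add _, fun x => ?_⟩
  have hx : x = ∑ i, x i • (Pi.single i 1 : Fin p → ℝ) := by
    ext j; simp [Pi.single_apply]
  calc N x ≤ ∑ i, N (x i • (Pi.single i 1 : Fin p → ℝ)) := by
        conv_lhs => rw [hx]
        exact N_sum hN_smul hN_add _ _
    _ = ∑ i, |x i| * N (Pi.single i 1) := by simp [hN_smul]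
    _ ≤ ∑ i, ‖x‖ * N (Pi.single i 1) := by
        refine Finset.sum_le_sum fun i _ => ?_
        exact mul_le_mul_of_nonneg_right (norm_le_pi_norm x i) (N_nonneg hN_smul hN_add _)
    _ = (∑ i, N (Pi.single i 1)) * ‖x‖ := by rw [← Finset.mul_sum, mul_comm]

lemma N_continuous (hN_smul : ∀ (a : ℝ) v, N (a • v) = |a| * N v)
    (hN_add : ∀ v w, N (v + w) ≤ N v + N w) : Continuous N := by
  obtain ⟨C, hC0, hC⟩ := N_upper hN_smul hN_add
  have hlip : LipschitzWith ⟨C, hC0⟩ N := by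
    apply LipschitzWith.of_dist_le_mul
    intro x y
    show dist (N x) (N y) ≤ C * dist x y
    rw [Real.dist_eq, dist_eq_norm]
    have hxy : N (x - y) ≤ C * ‖x - y‖ := hC _
    have h1 : N x - N y ≤ N (x - y) := by
      have := hN_add (x - y) y; rw [sub_add_cancel] at this; linarith
    have h2 : N y - N x ≤ N (x - y) := by
      have h3 := hN_add (y - x) x; rw [sub_add_cancel] at h3
      have h4 : N (y - x) = N (x - y) := by
        rw [show y - x = -(x - y) by ring, N_neg hN_smul]
      linarith
    rw [abs_sub_le_iff]
    exact ⟨h1.trans hxy, h2.trans hxy⟩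
  exact hlip.continuous

lemma N_lower (hN_eq : ∀ v, N v = 0 ↔ v = 0)
    (hN_smul : ∀ (a : ℝ) v, N (a • v) = |a| * N v)
    (hN_add : ∀ v w, N (v + w) ≤ N v + N w) :
    ∃ c : ℝ, 0 < c ∧ ∀ x, c * ‖x‖ ≤ N x := by
  have hNz : N 0 = 0 := N_zero hN_smul
  have hcont : Continuous N := N_continuous hN_smul hN_add
  rcases isEmpty_or_nonempty (Fin p) with he | hp
  · refine ⟨1, one_pos, fun x => ?_⟩
    have hx : x = 0 := funext fun i => (he.false i).elim
    simp [hx, hNz]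
  · have hsn : (Metric.sphere (0 : Fin p → ℝ) 1).Nonempty :=
      NormedSpace.sphere_nonempty.mpr zero_le_one
    obtain ⟨x0, hx0S, hx0min⟩ :=
      (isCompact_sphere (0 : Fin p → ℝ) 1).exists_isMinOn hsn hcont.continuousOn
    have hx0n : ‖x0‖ = 1 := by simpa using hx0S
    have hx0ne : x0 ≠ 0 := by intro h; rw [h] at hx0n; simp at hx0n
    have hc0 : 0 < N x0 :=
      lt_of_le_of_ne (N_nonneg hN_smul hN_add x0)
        (fun h => hx0ne ((hN_eq x0).mp h.symm))
    refine ⟨N x0, hc0, fun x => ?_⟩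
    rcases eq_or_ne x 0 with rfl | hx
    · simp [hNz]
    · have hxn : (0:ℝ) < ‖x‖ := norm_pos_iff.mpr hx
      have hu : ‖‖x‖⁻¹ • x‖ = 1 := by
        rw [norm_smul]
        simp [abs_of_pos (inv_pos.mpr hxn), inv_mul_cancel₀ hxn.ne']
      have huS : (‖x‖⁻¹ • x) ∈ Metric.sphere (0 : Fin p → ℝ) 1 := by simpa using hu
      have hmin := hx0min huS
      have hNx : N x = ‖x‖ * N (‖x‖⁻¹ • x) := by
        conv_lhs => rw [show x = ‖x‖ • (‖x‖⁻¹ • x) by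
          rw [smul_smul, mul_inv_cancel₀ hxn.ne', one_smul]]
        rw [hN_smul, abs_of_pos hxn]
      rw [hNx, mul_comm (N x0)]
      exact mul_le_mul_of_nonneg_left hmin hxn.le

end helpers

section dual
variable {p : ℕ} {N : (Fin p → ℝ) → ℝ}

lemma D_set_nonempty (hN_smul : ∀ (a : ℝ) v, N (a • v) = |a| * N v) (θ : Fin p → ℝ) :
    {v | ∃ x : Fin p → ℝ, N x ≤ 1 ∧ v = |θ ⬝ᵥ x|}.Nonempty := by
  exact ⟨0, 0, by simp [N_zero hN_smul], by simp⟩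

lemma D_bdd (hN_eq : ∀ v, N v = 0 ↔ v = 0)
    (hN_smul : ∀ (a : ℝ) v, N (a • v) = |a| * N v)
    (hN_add : ∀ v w, N (v + w) ≤ N v + N w) (θ : Fin p → ℝ) :
    BddAbove {v | ∃ x : Fin p → ℝ, N x ≤ 1 ∧ v = |θ ⬝ᵥ x|} := by
  obtain ⟨c, hc, hcl⟩ := N_lower hN_eq hN_smul hN_add
  refine ⟨(∑ i, |θ i|) * c⁻¹, fun v hv => ?_⟩
  obtain ⟨x, hx, rfl⟩ := hv
  have hxb : ‖x‖ ≤ c⁻¹ := by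
    have h1 : c * ‖x‖ ≤ 1 := (hcl x).trans hx
    calc ‖x‖ = c⁻¹ * (c * ‖x‖) := by field_simp
      _ ≤ c⁻¹ * 1 := mul_le_mul_of_nonneg_left h1 (inv_nonneg.mpr hc.le)
      _ = c⁻¹ := mul_one _
  calc |θ ⬝ᵥ x| ≤ ∑ i, |θ i * x i| := by
        exact (Finset.abs_sum_le_sum_abs _ _)
    _ ≤ ∑ i, |θ i| * c⁻¹ := by
        refine Finset.sum_le_sum fun i _ => ?_
        rw [abs_mul]
        exact mul_le_mul_of_nonneg_left ((norm_le_pi_norm x i).trans hxb) (abs_nonneg _)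
    _ = (∑ i, |θ i|) * c⁻¹ := by rw [Finset.sum_mul]
end dual
section dual2
variable {p : ℕ} {N : (Fin p → ℝ) → ℝ}
variable (hN_eq : ∀ v, N v = 0 ↔ v = 0)
variable (hN_smul : ∀ (a : ℝ) v, N (a • v) = |a| * N v)
variable (hN_add : ∀ v w, N (v + w) ≤ N v + N w)

include hN_eq hN_smul hN_add

lemma D_le_of {θ x : Fin p → ℝ} (hx : N x ≤ 1) : |θ ⬝ᵥ x| ≤ dualNorm N θ :=
  le_csSup (D_bdd hN_eq hN_smul hN_add θ) ⟨x, hx, rfl⟩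

lemma D_nonneg (θ : Fin p → ℝ) : 0 ≤ dualNorm N θ := by
  have h := D_le_of hN_eq hN_smul hN_add (θ := θ) (x := 0) (by simp [N_zero hN_smul])
  simpa using h

omit hN_eq in
lemma D_le {θ : Fin p → ℝ} {b : ℝ} (hb : ∀ x, N x ≤ 1 → |θ ⬝ᵥ x| ≤ b) :
    dualNorm N θ ≤ b :=
  csSup_le (D_set_nonempty hN_smul θ) (fun v hv => by obtain ⟨x, hx, rfl⟩ := hv; exact hb x hx)

lemma D_zero : dualNorm N (0 : Fin p → ℝ) = 0 :=
  le_antisymm (D_le hN_smul hN_add (fun x _ => by simp)) (D_nonneg hN_eq hN_smul hN_add 0)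

lemma D_pair (θ x : Fin p → ℝ) : |θ ⬝ᵥ x| ≤ dualNorm N θ * N x := by
  rcases eq_or_ne x 0 with rfl | hx
  · simp [N_zero hN_smul]
  · have hNx : 0 < N x :=
      lt_of_le_of_ne (N_nonneg hN_smul hN_add x) (fun h => hx ((hN_eq x).mp h.symm))
    have hu : N ((N x)⁻¹ • x) ≤ 1 := by
      rw [hN_smul, abs_of_pos (inv_pos.mpr hNx), inv_mul_cancel₀ hNx.ne']
    have h := D_le_of hN_eq hN_smul hN_add (θ := θ) hu
    rw [dotProduct_smul, smul_eq_mul, abs_mul, abs_of_pos (inv_pos.mpr hNx)] at h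
    calc |θ ⬝ᵥ x| = N x * ((N x)⁻¹ * |θ ⬝ᵥ x|) := by field_simp
      _ ≤ N x * dualNorm N θ := mul_le_mul_of_nonneg_left h hNx.le
      _ = dualNorm N θ * N x := mul_comm _ _

lemma D_add (θ φ : Fin p → ℝ) :
    dualNorm N (θ + φ) ≤ dualNorm N θ + dualNorm N φ := by
  refine D_le hN_smul hN_add fun x hx => ?_
  rw [add_dotProduct]
  exact (abs_add_le _ _).trans (add_le_add (D_le_of hN_eq hN_smul hN_add hx)
    (D_le_of hN_eq hN_smul hN_add hx))

lemma D_smul_le (a : ℝ) (θ : Fin p → ℝ) :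
    dualNorm N (a • θ) ≤ |a| * dualNorm N θ := by
  refine D_le hN_smul hN_add fun x hx => ?_
  rw [smul_dotProduct, smul_eq_mul, abs_mul]
  exact mul_le_mul_of_nonneg_left (D_le_of hN_eq hN_smul hN_add hx) (abs_nonneg a)

lemma D_smul (a : ℝ) (θ : Fin p → ℝ) :
    dualNorm N (a • θ) = |a| * dualNorm N θ := by
  rcases eq_or_ne a 0 with rfl | ha
  · simp [D_zero hN_eq hN_smul hN_add]
  · refine le_antisymm (D_smul_le hN_eq hN_smul hN_add a θ) ?_
    have h := D_smul_le hN_eq hN_smul hN_add a⁻¹ (a • θ)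
    rw [smul_smul, inv_mul_cancel₀ ha, one_smul] at h
    have ha' : 0 < |a| := abs_pos.mpr ha
    calc |a| * dualNorm N θ ≤ |a| * (|a⁻¹| * dualNorm N (a • θ)) :=
        mul_le_mul_of_nonneg_left h ha'.le
      _ = dualNorm N (a • θ) := by rw [abs_inv]; field_simp

lemma D_upper : ∃ C : ℝ, 0 ≤ C ∧ ∀ θ, dualNorm N θ ≤ C * ‖θ‖ := by
  obtain ⟨c, hc, hcl⟩ := N_lower hN_eq hN_smul hN_add
  refine ⟨(p : ℝ) * c⁻¹, by positivity, fun θ => ?_⟩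
  refine D_le hN_smul hN_add fun x hx => ?_
  have hxb : ‖x‖ ≤ c⁻¹ := by
    have h1 : c * ‖x‖ ≤ 1 := (hcl x).trans hx
    calc ‖x‖ = c⁻¹ * (c * ‖x‖) := by field_simp
      _ ≤ c⁻¹ * 1 := mul_le_mul_of_nonneg_left h1 (inv_nonneg.mpr hc.le)
      _ = c⁻¹ := mul_one _
  calc |θ ⬝ᵥ x| ≤ ∑ i, |θ i * x i| := Finset.abs_sum_le_sum_abs _ _
    _ ≤ ∑ _i : Fin p, ‖θ‖ * c⁻¹ := by
        refine Finset.sum_le_sum fun i _ => ?_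
        rw [abs_mul]
        exact mul_le_mul (norm_le_pi_norm θ i) ((norm_le_pi_norm x i).trans hxb)
          (abs_nonneg _) (norm_nonneg _)
    _ = (p : ℝ) * c⁻¹ * ‖θ‖ := by
        rw [Finset.sum_const, Finset.card_univ, Fintype.card_fin, nsmul_eq_mul]; ring

lemma D_continuous : Continuous (dualNorm N) := by
  obtain ⟨C, hC0, hC⟩ := D_upper hN_eq hN_smul hN_add
  have hlip : LipschitzWith ⟨C, hC0⟩ (dualNorm N) := by
    apply LipschitzWith.of_dist_le_mul
    intro x y
    show dist (dualNorm N x) (dualNorm N y) ≤ C * dist x y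
    rw [Real.dist_eq, dist_eq_norm]
    have hxy : dualNorm N (x - y) ≤ C * ‖x - y‖ := hC _
    have h1 : dualNorm N x - dualNorm N y ≤ dualNorm N (x - y) := by
      have := D_add hN_eq hN_smul hN_add (x - y) y
      rw [sub_add_cancel] at this; linarith
    have h2 : dualNorm N y - dualNorm N x ≤ dualNorm N (x - y) := by
      have h3 := D_add hN_eq hN_smul hN_add (y - x) x
      rw [sub_add_cancel] at h3
      have h4 : dualNorm N (y - x) = dualNorm N (x - y) := by
        rw [show y - x = (-1 : ℝ) • (x - y) by simp, D_smul hN_eq hN_smul hN_add]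
        simp
      linarith
    rw [abs_sub_le_iff]
    exact ⟨h1.trans hxy, h2.trans hxy⟩
  exact hlip.continuous

lemma D_lower : ∃ c : ℝ, 0 < c ∧ ∀ θ, c * ‖θ‖ ≤ dualNorm N θ := by
  set M : ℝ := 1 + ∑ i, N (Pi.single i 1) with hM
  have hM1 : 1 ≤ M := by
    have : 0 ≤ ∑ i, N (Pi.single i 1) :=
      Finset.sum_nonneg fun i _ => N_nonneg hN_smul hN_add _
    simp [hM]; linarith
  have hM0 : 0 < M := lt_of_lt_of_le one_pos hM1
  refine ⟨M⁻¹, inv_pos.mpr hM0, fun θ => ?_⟩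
  have key : ∀ i, |θ i| ≤ M * dualNorm N θ := by
    intro i
    have hne : (Pi.single i 1 : Fin p → ℝ) ≠ 0 := by
      intro h
      have := congrFun h i
      simp at this
    have hNe : 0 < N (Pi.single i 1) :=
      lt_of_le_of_ne (N_nonneg hN_smul hN_add _)
        (fun h => hne ((hN_eq _).mp h.symm))
    have hu : N ((N (Pi.single i 1))⁻¹ • (Pi.single i 1 : Fin p → ℝ)) ≤ 1 := by
      rw [hN_smul, abs_of_pos (inv_pos.mpr hNe), inv_mul_cancel₀ hNe.ne']
    have h := D_le_of hN_eq hN_smul hN_add (θ := θ) hu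
    rw [dotProduct_smul, smul_eq_mul, abs_mul, abs_of_pos (inv_pos.mpr hNe)] at h
    have hsingle : θ ⬝ᵥ (Pi.single i 1 : Fin p → ℝ) = θ i := by
      rw [dotProduct_single, mul_one]
    rw [hsingle] at h
    have hNeM : N (Pi.single i 1) ≤ M := by
      rw [hM]
      have := Finset.single_le_sum (f := fun j => N (Pi.single j (1:ℝ)))
        (fun j _ => N_nonneg hN_smul hN_add _) (Finset.mem_univ i)
      linarith
    calc |θ i| = N (Pi.single i 1) * ((N (Pi.single i 1))⁻¹ * |θ i|) := by field_simp
      _ ≤ N (Pi.single i 1) * dualNorm N θ := mul_le_mul_of_nonneg_left h hNe.le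
      _ ≤ M * dualNorm N θ := mul_le_mul_of_nonneg_right hNeM
          (D_nonneg hN_eq hN_smul hN_add θ)
  have hnorm : ‖θ‖ ≤ M * dualNorm N θ := by
    have hDn : 0 ≤ dualNorm N θ := D_nonneg hN_eq hN_smul hN_add θ
    refine (pi_norm_le_iff_of_nonneg (mul_nonneg hM0.le hDn)).mpr fun i => ?_
    simpa using key i
  calc M⁻¹ * ‖θ‖ ≤ M⁻¹ * (M * dualNorm N θ) :=
      mul_le_mul_of_nonneg_left hnorm (inv_nonneg.mpr hM0.le)
    _ = dualNorm N θ := by field_simp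

end dual2
section main
variable {n p : ℕ} {N : (Fin p → ℝ) → ℝ}
variable (hN_eq : ∀ v, N v = 0 ↔ v = 0)
variable (hN_smul : ∀ (a : ℝ) v, N (a • v) = |a| * N v)
variable (hN_add : ∀ v w, N (v + w) ≤ N v + N w)
variable {X : Matrix (Fin n) (Fin p) ℝ}

lemma X_surj (hrank : X.rank = n) (z : Fin n → ℝ) : ∃ θ, X *ᵥ θ = z := by
  have h : LinearMap.range X.mulVecLin = ⊤ := by
    apply Submodule.eq_top_of_finrank_eq
    have hd : X.rank = Module.finrank ℝ (LinearMap.range X.mulVecLin) := rfl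
    rw [← hd, hrank, Module.finrank_pi, Fintype.card_fin]
  obtain ⟨θ, hθ⟩ := LinearMap.range_eq_top.mp h z
  exact ⟨θ, by rw [← Matrix.mulVecLin_apply, hθ]⟩

include hN_eq hN_smul hN_add

lemma primal_attain (hrank : X.rank = n) (z : Fin n → ℝ) :
    ∃ θh : Fin p → ℝ, X *ᵥ θh = z ∧
      ∀ θ, X *ᵥ θ = z → dualNorm N θh ≤ dualNorm N θ := by
  obtain ⟨θ0, hθ0⟩ := X_surj hrank z
  set K := {θ : Fin p → ℝ | X *ᵥ θ = z ∧ dualNorm N θ ≤ dualNorm N θ0} with hKdef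
  have hK0 : θ0 ∈ K := ⟨hθ0, le_rfl⟩
  have hDc : Continuous (dualNorm N) := D_continuous hN_eq hN_smul hN_add
  have hclosed : IsClosed K := by
    have hc : Continuous (fun θ => X *ᵥ θ) := by
      have : Continuous X.mulVecLin := X.mulVecLin.continuous_of_finiteDimensional
      exact this
    exact (isClosed_eq hc continuous_const).inter (isClosed_le hDc continuous_const)
  have hbdd : Bornology.IsBounded K := by
    obtain ⟨c, hc, hcl⟩ := D_lower hN_eq hN_smul hN_add
    apply (Metric.isBounded_closedBall
      (x := (0 : Fin p → ℝ)) (r := c⁻¹ * dualNorm N θ0)).subset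
    intro θ hθ
    rw [Metric.mem_closedBall, dist_zero_right]
    have h1 := hcl θ
    have h2 := hθ.2
    calc ‖θ‖ = c⁻¹ * (c * ‖θ‖) := by field_simp
      _ ≤ c⁻¹ * dualNorm N θ :=
        mul_le_mul_of_nonneg_left h1 (inv_nonneg.mpr hc.le)
      _ ≤ c⁻¹ * dualNorm N θ0 :=
        mul_le_mul_of_nonneg_left h2 (inv_nonneg.mpr hc.le)
  have hcpt : IsCompact K := Metric.isCompact_of_isClosed_isBounded hclosed hbdd
  obtain ⟨θh, hθhK, hmin⟩ := hcpt.exists_isMinOn ⟨θ0, hK0⟩ hDc.continuousOn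
  refine ⟨θh, hθhK.1, fun θ hθ => ?_⟩
  by_cases h : dualNorm N θ ≤ dualNorm N θ0
  · exact hmin ⟨hθ, h⟩
  · exact (hmin hK0).trans (le_of_not_ge h)

omit hN_eq hN_smul hN_add in
lemma dot_of_lin {k : ℕ} (g : (Fin k → ℝ) →ₗ[ℝ] ℝ) (z : Fin k → ℝ) :
    (fun i => g (Pi.single i 1)) ⬝ᵥ z = g z := by
  have hz : z = ∑ i, z i • (Pi.single i 1 : Fin k → ℝ) := by
    ext j; simp [Pi.single_apply]
  conv_rhs => rw [hz]
  rw [map_sum]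
  simp [dotProduct, _root_.map_smul, smul_eq_mul, mul_comm]

lemma N_bidual (w : Fin p → ℝ) (hw : ∀ θ, w ⬝ᵥ θ ≤ dualNorm N θ) : N w ≤ 1 := by
  rcases eq_or_ne w 0 with rfl | hwne
  · rw [N_zero hN_smul]; exact zero_le_one
  · have H : ∀ c : ℝ, c • w = 0 → c • N w = 0 := by
      intro c hc
      rcases smul_eq_zero.mp hc with rfl | h
      · simp
      · exact absurd h hwne
    set f := LinearPMap.mkSpanSingleton' (σ := RingHom.id ℝ) w (N w) H with hfdef
    have hhom : ∀ c : ℝ, 0 < c → ∀ x, N (c • x) = c * N x := by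
      intro c hc x; rw [hN_smul, abs_of_pos hc]
    have hf : ∀ x : f.domain, f x ≤ N x := by
      rintro ⟨x, hx⟩
      have hx' : x ∈ Submodule.span ℝ {w} := hx
      obtain ⟨c, rfl⟩ := Submodule.mem_span_singleton.mp hx'
      have happ : f ⟨c • w, hx⟩ = c • N w := LinearPMap.mkSpanSingleton'_apply w (N w) H c hx
      rw [happ]
      have : N (c • w) = |c| * N w := hN_smul c w
      have hNw : 0 ≤ N w := N_nonneg hN_smul hN_add w
      simp only [smul_eq_mul, this]
      nlinarith [le_abs_self c]
    obtain ⟨g, hg1, hg2⟩ := exists_extension_of_le_sublinear f N hhom hN_add hf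
    set θ : Fin p → ℝ := fun i => g (Pi.single i 1) with hθdef
    have hθ : ∀ x, θ ⬝ᵥ x = g x := dot_of_lin g
    have hD1 : dualNorm N θ ≤ 1 := by
      refine D_le hN_smul hN_add fun x hx => ?_
      rw [hθ, abs_le]
      constructor
      · have h1 : g (-x) ≤ N (-x) := hg2 (-x)
        rw [map_neg, N_neg hN_smul] at h1
        linarith [h1, hx]
      · exact (hg2 x).trans hx
    have hwmem : w ∈ f.domain := by
      rw [hfdef, LinearPMap.domain_mkSpanSingleton]
      exact Submodule.mem_span_singleton_self w
    have hgw : g w = N w := by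
      have h1 := hg1 ⟨w, hwmem⟩
      have h2 : f ⟨w, hwmem⟩ = N w :=
        LinearPMap.mkSpanSingleton'_apply_self w (N w) H hwmem
      rw [h2] at h1
      exact h1
    have hfin : N w = w ⬝ᵥ θ := by
      rw [dotProduct_comm, hθ, hgw]
    rw [hfin]
    exact (hw θ).trans hD1
end main
section main2
variable {n p : ℕ} {N : (Fin p → ℝ) → ℝ}
variable (hN_eq : ∀ v, N v = 0 ↔ v = 0)
variable (hN_smul : ∀ (a : ℝ) v, N (a • v) = |a| * N v)
variable (hN_add : ∀ v w, N (v + w) ≤ N v + N w)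
variable {X : Matrix (Fin n) (Fin p) ℝ} {y : Fin n → ℝ}

include hN_eq hN_smul hN_add

lemma exists_dual_opt (hrank : X.rank = n) (θh : Fin p → ℝ)
    (hθh : X *ᵥ θh = y) (hmin : ∀ θ, X *ᵥ θ = y → dualNorm N θh ≤ dualNorm N θ) :
    ∃ α : Fin n → ℝ, N (α ᵥ* X) ≤ 1 ∧ α ⬝ᵥ y = dualNorm N θh := by
  rcases eq_or_ne y 0 with rfl | hy
  · refine ⟨0, ?_, ?_⟩
    · rw [Matrix.zero_vecMul, N_zero hN_smul]; exact zero_le_one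
    · have h0 : dualNorm N θh ≤ 0 := by
        have h := hmin 0 (by rw [Matrix.mulVec_zero])
        rwa [D_zero hN_eq hN_smul hN_add] at h
      have h1 := D_nonneg hN_eq hN_smul hN_add θh
      rw [zero_dotProduct]
      linarith
  · have hall := primal_attain hN_eq hN_smul hN_add (X := X) hrank
    choose θm hθm1 hθm2 using hall
    set F : (Fin n → ℝ) → ℝ := fun z => dualNorm N (θm z) with hF
    have hFle : ∀ z θ, X *ᵥ θ = z → F z ≤ dualNorm N θ := fun z θ h => hθm2 z θ h
    have hFnn : ∀ z, 0 ≤ F z := fun z => D_nonneg hN_eq hN_smul hN_add _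
    have hFadd : ∀ z1 z2, F (z1 + z2) ≤ F z1 + F z2 := by
      intro z1 z2
      have hfeas : X *ᵥ (θm z1 + θm z2) = z1 + z2 := by
        rw [Matrix.mulVec_add, hθm1, hθm1]
      exact (hFle _ _ hfeas).trans (D_add hN_eq hN_smul hN_add _ _)
    have hFhom : ∀ c : ℝ, 0 < c → ∀ z, F (c • z) = c * F z := by
      intro c hc z
      apply le_antisymm
      · have hfeas : X *ᵥ (c • θm z) = c • z := by rw [Matrix.mulVec_smul, hθm1]
        have h := hFle _ _ hfeas
        rwa [D_smul hN_eq hN_smul hN_add, abs_of_pos hc] at h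
      · have hfeas : X *ᵥ (c⁻¹ • θm (c • z)) = z := by
          rw [Matrix.mulVec_smul, hθm1, smul_smul, inv_mul_cancel₀ hc.ne', one_smul]
        have h2 := hFle _ _ hfeas
        rw [D_smul hN_eq hN_smul hN_add, abs_of_pos (inv_pos.mpr hc)] at h2
        calc c * F z ≤ c * (c⁻¹ * F (c • z)) := mul_le_mul_of_nonneg_left h2 hc.le
          _ = F (c • z) := by field_simp
    have hFy : F y = dualNorm N θh := le_antisymm (hFle y θh hθh) (hmin _ (hθm1 y))
    have H : ∀ c : ℝ, c • y = 0 → c • F y = 0 := by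
      intro c hc
      rcases smul_eq_zero.mp hc with rfl | h
      · simp
      · exact absurd h hy
    set f := LinearPMap.mkSpanSingleton' (σ := RingHom.id ℝ) y (F y) H with hfdef
    have hf : ∀ x : f.domain, f x ≤ F x := by
      rintro ⟨x, hx⟩
      have hx' : x ∈ Submodule.span ℝ {y} := hx
      obtain ⟨c, rfl⟩ := Submodule.mem_span_singleton.mp hx'
      have happ : f ⟨c • y, hx⟩ = c • F y :=
        LinearPMap.mkSpanSingleton'_apply y (F y) H c hx
      rw [happ, smul_eq_mul]
      rcases lt_trichotomy c 0 with hlt | heq | hgt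
      · have h1 := hFnn (c • y)
        have h2 := hFnn y
        nlinarith
      · subst heq
        simpa using hFnn ((0:ℝ) • y)
      · rw [hFhom c hgt]
    obtain ⟨g, hg1, hg2⟩ := exists_extension_of_le_sublinear f F hFhom hFadd hf
    set α : Fin n → ℝ := fun i => g (Pi.single i 1) with hα
    have hαg : ∀ z, α ⬝ᵥ z = g z := dot_of_lin g
    have hymem : y ∈ f.domain := by
      rw [hfdef, LinearPMap.domain_mkSpanSingleton]
      exact Submodule.mem_span_singleton_self y
    have hgy : g y = F y := by
      have h1 := hg1 ⟨y, hymem⟩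
      have h2 : f ⟨y, hymem⟩ = F y :=
        LinearPMap.mkSpanSingleton'_apply_self y (F y) H hymem
      rw [h2] at h1
      exact h1
    refine ⟨α, ?_, by rw [hαg, hgy, hFy]⟩
    apply N_bidual hN_eq hN_smul hN_add
    intro θ
    have h1 : (α ᵥ* X) ⬝ᵥ θ = α ⬝ᵥ (X *ᵥ θ) := (Matrix.dotProduct_mulVec α X θ).symm
    rw [h1, hαg]
    exact (hg2 _).trans (hFle _ _ rfl)

end main2

theorem stmt6 {n p : ℕ} (N : (Fin p → ℝ) → ℝ)
    (hN_eq : ∀ v, N v = 0 ↔ v = 0)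
    (hN_smul : ∀ (a : ℝ) v, N (a • v) = |a| * N v)
    (hN_add : ∀ v w, N (v + w) ≤ N v + N w)
    (X : Matrix (Fin n) (Fin p) ℝ) (y : Fin n → ℝ)
    (hrank : X.rank = n) :
    (∃ m : ℝ,
      IsLeast {v | ∃ θ : Fin p → ℝ, X *ᵥ θ = y ∧ v = dualNorm N θ} m ∧
      IsGreatest {v | ∃ α : Fin n → ℝ, N (α ᵥ* X) ≤ 1 ∧ v = α ⬝ᵥ y} m) ∧
    (∀ (θh : Fin p → ℝ) (αh : Fin n → ℝ), X *ᵥ θh = y → N (αh ᵥ* X) ≤ 1 →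
      (((∀ θ : Fin p → ℝ, X *ᵥ θ = y → dualNorm N θh ≤ dualNorm N θ) ∧
        (∀ α : Fin n → ℝ, N (α ᵥ* X) ≤ 1 → α ⬝ᵥ y ≤ αh ⬝ᵥ y)) ↔
        (∀ θ : Fin p → ℝ, dualNorm N θh + (αh ᵥ* X) ⬝ᵥ (θ - θh) ≤ dualNorm N θ))) := by
  obtain ⟨θs, hθs, hminθ⟩ := primal_attain hN_eq hN_smul hN_add hrank y
  obtain ⟨αs, hαs1, hαs2⟩ := exists_dual_opt hN_eq hN_smul hN_add hrank θs hθs hminθ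
  set m := dualNorm N θs with hm
  -- general pairing fact
  have hpair : ∀ (α : Fin n → ℝ), N (α ᵥ* X) ≤ 1 →
      ∀ θ : Fin p → ℝ, (α ᵥ* X) ⬝ᵥ θ ≤ dualNorm N θ := by
    intro α hα θ
    calc (α ᵥ* X) ⬝ᵥ θ ≤ |(α ᵥ* X) ⬝ᵥ θ| := le_abs_self _
      _ = |θ ⬝ᵥ (α ᵥ* X)| := by rw [dotProduct_comm]
      _ ≤ dualNorm N θ * N (α ᵥ* X) := D_pair hN_eq hN_smul hN_add _ _
      _ ≤ dualNorm N θ * 1 :=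
          mul_le_mul_of_nonneg_left hα (D_nonneg hN_eq hN_smul hN_add θ)
      _ = dualNorm N θ := mul_one _
  have hleast : IsLeast {v | ∃ θ : Fin p → ℝ, X *ᵥ θ = y ∧ v = dualNorm N θ} m :=
    ⟨⟨θs, hθs, rfl⟩, by rintro v ⟨θ, hθ, rfl⟩; exact hminθ θ hθ⟩
  have hgreat : IsGreatest {v | ∃ α : Fin n → ℝ, N (α ᵥ* X) ≤ 1 ∧ v = α ⬝ᵥ y} m := by
    constructor
    · exact ⟨αs, hαs1, hαs2.symm⟩
    · rintro v ⟨α, hαf, rfl⟩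
      calc α ⬝ᵥ y = (α ᵥ* X) ⬝ᵥ θs := by rw [← hθs, Matrix.dotProduct_mulVec]
        _ ≤ dualNorm N θs := hpair α hαf θs
  refine ⟨⟨m, hleast, hgreat⟩, ?_⟩
  intro θ1 α1 hθ1 hα1f
  have hdot : (α1 ᵥ* X) ⬝ᵥ θ1 = α1 ⬝ᵥ y := by
    rw [← Matrix.dotProduct_mulVec, hθ1]
  constructor
  · rintro ⟨hopt1, hopt2⟩
    have e1 : dualNorm N θ1 = m :=
      le_antisymm (hopt1 θs hθs) (hleast.2 ⟨θ1, hθ1, rfl⟩)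
    have e2 : α1 ⬝ᵥ y = m := by
      refine le_antisymm (hgreat.2 ⟨α1, hα1f, rfl⟩) ?_
      have h := hopt2 αs hαs1
      rw [hαs2] at h
      exact h
    intro θ
    have hsub : (α1 ᵥ* X) ⬝ᵥ (θ - θ1) = (α1 ᵥ* X) ⬝ᵥ θ - (α1 ᵥ* X) ⬝ᵥ θ1 := by
      rw [dotProduct_sub]
    rw [hsub, hdot, e2, e1]
    have := hpair α1 hα1f θ
    linarith
  · intro hsubgrad
    have h0 := hsubgrad 0
    rw [zero_sub, dotProduct_neg, hdot, D_zero hN_eq hN_smul hN_add] at h0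
    have e3 : dualNorm N θ1 ≤ α1 ⬝ᵥ y := by linarith
    have e4 : α1 ⬝ᵥ y ≤ dualNorm N θ1 := by
      rw [← hdot]; exact hpair α1 hα1f θ1
    have e5 : dualNorm N θ1 = α1 ⬝ᵥ y := le_antisymm e3 e4
    constructor
    · intro θ hθfeas
      have hw : (α1 ᵥ* X) ⬝ᵥ θ = α1 ⬝ᵥ y := by
        rw [← Matrix.dotProduct_mulVec, hθfeas]
      calc dualNorm N θ1 = α1 ⬝ᵥ y := e5
        _ = (α1 ᵥ* X) ⬝ᵥ θ := hw.symm
        _ ≤ dualNorm N θ := hpair α1 hα1f θ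
    · intro α hαfeas
      calc α ⬝ᵥ y = (α ᵥ* X) ⬝ᵥ θ1 := by rw [← Matrix.dotProduct_mulVec, hθ1]
        _ ≤ dualNorm N θ1 := hpair α hαfeas θ1
        _ = α1 ⬝ᵥ y := e5
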